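/- For every n ≥ 0, the number pod(n) of partitions of n in which no odd part is repeated satisfies pod(n) = (−1)^n ∑_{c∈C_{P₃}, |c|=n} (−1)^{ℓ(c)}, where the (finite) sum is over all compositions of size n with every part a triangular number. -/

import Mathlib

open PowerSeries Finset

namespace PodProof

noncomputable section

/-! ### Truncated equality of power series -/

def TEq (m : ℕ) (f g : PowerSeries ℤ) : Prop := ∀ i ≤ m, coeff i f = coeff i g

lemma TEq.refl {m : ℕ} (f : PowerSeries ℤ) : TEq m f f := fun _ _ => rfl

lemma TEq.of_eq {m : ℕ} {f g : PowerSeries ℤ} (h : f = g) : TEq m f g := fun _ _ => by rw [h]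

lemma TEq.symm {m : ℕ} {f g : PowerSeries ℤ} (h : TEq m f g) : TEq m g f :=
  fun i hi => (h i hi).symm

lemma TEq.trans {m : ℕ} {f g h : PowerSeries ℤ} (h1 : TEq m f g) (h2 : TEq m g h) :
    TEq m f h := fun i hi => (h1 i hi).trans (h2 i hi)

lemma TEq.mul {m : ℕ} {f g f' g' : PowerSeries ℤ} (h : TEq m f g) (h' : TEq m f' g') :
    TEq m (f * f') (g * g') := by
  intro i hi
  rw [coeff_mul, coeff_mul]
  apply Finset.sum_congr rfl
  rintro ⟨a, b⟩ hab
  rw [Finset.HasAntidiagonal.mem_antidiagonal] at hab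
  rw [h a (le_trans (by omega) hi), h' b (le_trans (by omega) hi)]

lemma TEq.add {m : ℕ} {f g f' g' : PowerSeries ℤ} (h : TEq m f g) (h' : TEq m f' g') :
    TEq m (f + f') (g + g') := by
  intro i hi
  rw [map_add, map_add, h i hi, h' i hi]

/-- Uniqueness of inverses mod `X^(m+1)`: if `u * v = 1` exactly and `u * w ≡ 1`,
then `w ≡ v`. -/
lemma TEq.inv_unique {m : ℕ} {u v w : PowerSeries ℤ} (huv : u * v = 1)
    (huw : TEq m (u * w) 1) : TEq m w v := by
  have h1 : TEq m (v * (u * w)) (v * 1) := TEq.mul (TEq.refl v) huw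
  have h2 : v * (u * w) = w * (u * v) := by ring
  have h3 : TEq m w (v * (u * w)) := by
    apply TEq.of_eq; rw [h2, huv, mul_one]
  refine h3.trans (h1.trans (TEq.of_eq (mul_one v)))

/-- A product of series each congruent to 1 is congruent to 1. -/
lemma TEq.prod_one {m : ℕ} {s : Finset ℕ} {f : ℕ → PowerSeries ℤ}
    (h : ∀ i ∈ s, TEq m (f i) 1) : TEq m (∏ i ∈ s, f i) 1 := by
  classical
  induction s using Finset.induction_on with
  | empty => exact TEq.refl 1
  | @insert a s' hx ih =>
    rw [Finset.prod_insert hx]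
    have := TEq.mul (h a (Finset.mem_insert_self a s'))
      (ih fun i hi => h i (Finset.mem_insert_of_mem hi))
    simpa using this

lemma TEq.sum {m : ℕ} {s : Finset α} {f g : α → PowerSeries ℤ}
    (h : ∀ i ∈ s, TEq m (f i) (g i)) : TEq m (∑ i ∈ s, f i) (∑ i ∈ s, g i) := by
  intro i hi
  rw [map_sum, map_sum]
  exact Finset.sum_congr rfl fun a ha => h a ha i hi

/-! ### Triangular numbers indexed by ℤ -/

def T (j : ℤ) : ℕ := ((j * (j + 1)) / 2).toNat

lemma T_two_mul (j : ℤ) : (T j : ℤ) * 2 = j * (j + 1) := by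
  obtain ⟨c, hc⟩ := Int.even_mul_succ_self j
  have hc2 : j * (j + 1) = 2 * c := by omega
  have hnn : 0 ≤ j * (j + 1) := by rcases le_or_gt 0 j with h | h <;> nlinarith
  rw [T, hc2, Int.mul_ediv_cancel_left _ (by norm_num)]
  omega

lemma T_succ (j : ℤ) : (T (j + 1) : ℤ) = T j + (j + 1) := by
  have h1 := T_two_mul j
  have h2 := T_two_mul (j + 1)
  nlinarith [h1, h2]

lemma T_neg (j : ℤ) : T (-j - 1) = T j := by
  have h1 := T_two_mul j
  have h2 := T_two_mul (-j - 1)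
  have : (-j - 1) * (-j - 1 + 1) = j * (j + 1) := by ring
  omega

lemma T_zero : T 0 = 0 := rfl

lemma T_ge_self (k : ℕ) : k ≤ T (k : ℤ) := by
  induction k with
  | zero => simp [T_zero]
  | succ n ih =>
    have h := T_succ (n : ℤ)
    have hcast : ((n+1:ℕ):ℤ) = (n:ℤ)+1 := by push_cast; ring
    rw [hcast]
    omega

lemma T_strictMono : StrictMono (fun k : ℕ => T (k : ℤ)) := by
  apply strictMono_nat_of_lt_succ
  intro n
  have h := T_succ (n : ℤ)
  have hcast : ((n+1:ℕ):ℤ) = (n:ℤ)+1 := by push_cast; ring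
  simp only [hcast]
  omega

lemma T_natAbs_le {j : ℤ} (m : ℕ) (h : T j ≤ m) : j ≤ m ∧ -(m : ℤ) - 1 ≤ j := by
  constructor
  · by_contra hc
    push_neg at hc
    have h2 : ((m:ℤ)+1) ≤ j := by omega
    have h3 : T (((m:ℕ):ℤ)+1) ≤ T j := by
      -- monotone for nonneg arguments
      have : ∀ a b : ℤ, 0 ≤ a → a ≤ b → T a ≤ T b := by
        intro a b ha hab
        have h1 := T_two_mul a
        have h2 := T_two_mul b
        nlinarith
      exact this ((m:ℤ)+1) j (by omega) (by omega)
    have h4 := T_ge_self (m+1)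
    have hcast : ((m+1:ℕ):ℤ) = (m:ℤ)+1 := by push_cast; ring
    rw [hcast] at h4
    omega
  · by_contra hc
    push_neg at hc
    have h2 : T j = T (-j - 1) := (T_neg j).symm
    have h5 : ((m:ℤ)+1) ≤ -j-1 := by omega
    have hmono : ∀ a b : ℤ, 0 ≤ a → a ≤ b → T a ≤ T b := by
      intro a b ha hab
      have h1 := T_two_mul a
      have h2 := T_two_mul b
      nlinarith
    have h3 : T (((m:ℕ):ℤ)+1) ≤ T (-j-1) := hmono ((m:ℤ)+1) (-j-1) (by omega) h5
    have h4 := T_ge_self (m+1)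
    have hcast : ((m+1:ℕ):ℤ) = (m:ℤ)+1 := by push_cast; ring
    rw [hcast] at h4
    omega
/-! ### Gaussian binomial coefficients (ℤ-indexed column) -/

def gb : ℕ → ℤ → PowerSeries ℤ
  | 0, k => if k = 0 then 1 else 0
  | (M+1), k => gb M k + X ^ ((M + 1 - k).toNat) * gb M (k - 1)

lemma gb_zero_def (k : ℤ) : gb 0 k = if k = 0 then 1 else 0 := rfl

lemma gb_succ_def (M : ℕ) (k : ℤ) :
    gb (M+1) k = gb M k + X ^ ((M + 1 - k).toNat) * gb M (k - 1) := rfl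

lemma gb_eq_zero {M : ℕ} {k : ℤ} (h : k < 0 ∨ (M : ℤ) < k) : gb M k = 0 := by
  induction M generalizing k with
  | zero =>
    rw [gb_zero_def, if_neg]
    omega
  | succ M ih =>
    rw [gb_succ_def, ih (by omega), ih (by omega), mul_zero, add_zero]

lemma gb_diag (M : ℕ) : gb M (M : ℤ) = 1 := by
  induction M with
  | zero => simp [gb_zero_def]
  | succ M ih =>
    have hc : ((M+1 : ℕ) : ℤ) = (M:ℤ)+1 := by push_cast; ring
    rw [gb_succ_def, hc, gb_eq_zero (Or.inr (by omega))]
    have h1 : ((M:ℤ) + 1 - ((M:ℤ)+1)).toNat = 0 := by omega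
    have h2 : (M:ℤ) + 1 - 1 = (M:ℤ) := by ring
    rw [h1, h2, pow_zero, one_mul, ih, zero_add]

lemma gb_col_zero (M : ℕ) : gb M 0 = 1 := by
  induction M with
  | zero => simp [gb_zero_def]
  | succ M ih =>
    rw [gb_succ_def, ih, gb_eq_zero (by omega), mul_zero, add_zero]

lemma gb_rule2 (M : ℕ) (k : ℤ) :
    gb (M+1) k = X ^ k.toNat * gb M k + gb M (k - 1) := by
  induction M generalizing k with
  | zero =>
    rw [gb_succ_def]
    rcases eq_or_ne k 0 with rfl | h0
    · simp [gb_zero_def]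
    rcases eq_or_ne k 1 with rfl | h1
    · norm_num [gb_zero_def]
    · simp [gb_zero_def, if_neg h0, if_neg (show ¬(k-1=0) by omega)]
  | succ M ih =>
    rcases le_or_gt k 0 with hk0 | hk0
    · rcases eq_or_ne k 0 with rfl | hne
      · rw [gb_col_zero, gb_col_zero, gb_eq_zero (show (0:ℤ)-1 < 0 ∨ ((M+1:ℕ):ℤ) < (0:ℤ)-1 from Or.inl (by omega))]
        simp
      · rw [gb_eq_zero (show k < 0 ∨ ((M+1+1:ℕ):ℤ) < k from Or.inl (by omega)),
          gb_eq_zero (show k < 0 ∨ ((M+1:ℕ):ℤ) < k from Or.inl (by omega)),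
          gb_eq_zero (show k-1 < 0 ∨ ((M+1:ℕ):ℤ) < k-1 from Or.inl (by omega))]
        simp
    · rcases le_or_gt k ((M:ℤ)+1+1) with hkM | hkM
      · -- main case 1 ≤ k ≤ M+2; sub-case split on k ≤ M+1
        rcases le_or_gt k ((M:ℤ)+1) with hk1 | hk1
        · have key1 : gb (M+1) k - X ^ (k.toNat) * gb (M+1) k
              = gb M (k-1) - X ^ (M+1) * gb M (k-1) := by
            nth_rewrite 1 [ih k]
            nth_rewrite 1 [gb_succ_def M k]
            have comb : (X : PowerSeries ℤ) ^ k.toNat * X ^ (((M:ℤ) + 1 - k).toNat)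
                = X ^ (M+1) := by
              rw [← pow_add]
              congr 1
              omega
            calc X ^ k.toNat * gb M k + gb M (k - 1)
                  - X ^ k.toNat * (gb M k + X ^ ((M:ℤ) + 1 - k).toNat * gb M (k - 1))
                = gb M (k-1) - (X ^ k.toNat * X ^ (((M:ℤ) + 1 - k).toNat)) * gb M (k-1) := by
                  ring
              _ = _ := by rw [comb]
          have key2 : gb (M+1) (k-1) - X ^ (((M:ℤ)+1+1-k).toNat) * gb (M+1) (k-1)
              = gb M (k-1) - X ^ (M+1) * gb M (k-1) := by
            nth_rewrite 1 [gb_succ_def M (k-1)]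
            nth_rewrite 1 [ih (k-1)]
            have comb : (X : PowerSeries ℤ) ^ (((M:ℤ)+1+1-k).toNat) * X ^ ((k-1).toNat)
                = X ^ (M+1) := by
              rw [← pow_add]
              congr 1
              omega
            have hsame : ((M:ℤ) + 1 - (k-1)).toNat = ((M:ℤ)+1+1-k).toNat := by omega
            calc gb M (k-1) + X ^ ((M:ℤ) + 1 - (k-1)).toNat * gb M (k - 1 - 1)
                  - X ^ (((M:ℤ)+1+1-k).toNat) * (X ^ (k-1).toNat * gb M (k-1) + gb M (k-1-1))
                = gb M (k-1) - (X ^ (((M:ℤ)+1+1-k).toNat) * X ^ ((k-1).toNat)) * gb M (k-1)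
                  + (X ^ ((M:ℤ) + 1 - (k-1)).toNat - X ^ (((M:ℤ)+1+1-k).toNat)) * gb M (k-1-1)
                  := by ring
              _ = _ := by rw [comb, hsame]; ring
          rw [gb_succ_def (M+1) k]
          have hexp : ((M+1:ℕ) + 1 - k : ℤ).toNat = (((M:ℤ)+1+1-k)).toNat := by push_cast; omega
          rw [hexp]
          linear_combination key1 - key2
        · -- k = M+2 : boundary
          have hk : k = (M:ℤ)+2 := by omega
          subst hk
          rw [gb_succ_def (M+1) ((M:ℤ)+2)]
          rw [gb_eq_zero (show ((M:ℤ)+2) < 0 ∨ ((M+1:ℕ):ℤ) < (M:ℤ)+2 from Or.inr (by push_cast; omega))]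
          have h2 : (M:ℤ) + 2 - 1 = (M:ℤ)+1 := by ring
          have h3 : ((M+1:ℕ) + 1 - ((M:ℤ)+2)).toNat = 0 := by push_cast; omega
          rw [h2, h3]
          have h4 : gb (M+1) ((M:ℤ)+1) = 1 := by
            have := gb_diag (M+1)
            rwa [show ((M+1:ℕ):ℤ) = (M:ℤ)+1 by push_cast; ring] at this
          rw [h4]
          simp
      · -- k > M+2 : everything is zero
        rw [gb_eq_zero (show k < 0 ∨ ((M+1+1:ℕ):ℤ) < k from Or.inr (by push_cast; omega)),
          gb_eq_zero (show k < 0 ∨ ((M+1:ℕ):ℤ) < k from Or.inr (by push_cast; omega)),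
          gb_eq_zero (show k-1 < 0 ∨ ((M+1:ℕ):ℤ) < k-1 from Or.inr (by push_cast; omega))]
        simp
/-! ### The summand `F N j = gb (2N) (N+j) * X^(T j)` and its recurrence -/

def F (N : ℕ) (j : ℤ) : PowerSeries ℤ := gb (2*N) ((N:ℤ) + j) * X ^ (T j)

lemma F_eq_zero {N : ℕ} {j : ℤ} (h : j < -(N:ℤ) ∨ (N:ℤ) < j) : F N j = 0 := by
  rw [F, gb_eq_zero, zero_mul]
  rcases h with h | h
  · exact Or.inl (by omega)
  · exact Or.inr (by push_cast; omega)

lemma PJ (N : ℕ) (j : ℤ) :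
    F (N+1) j = (1 + X^(2*N+1)) * F N j + X^(N+1) * F N (j-1) + X^N * F N (j+1) := by
  have hc : (((N+1:ℕ)):ℤ) = (N:ℤ)+1 := by push_cast; ring
  unfold F
  rw [hc, show 2*(N+1) = (2*N+1)+1 from by ring]
  rw [gb_succ_def (2*N+1) ((N:ℤ)+1+j)]
  rw [gb_rule2 (2*N) ((N:ℤ)+1+j), gb_rule2 (2*N) ((N:ℤ)+1+j-1)]
  have i1 : (N:ℤ)+1+j-1 = (N:ℤ)+j := by ring
  have i2 : (N:ℤ)+j-1 = (N:ℤ)+(j-1) := by ring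
  have i3 : (N:ℤ)+1+j = (N:ℤ)+(j+1) := by ring
  rw [i1, i2, i3]
  have hT1 := T_succ j
  have hT0 := T_succ (j-1)
  rw [show j - 1 + 1 = j from by ring] at hT0
  rcases le_or_gt j (-(N:ℤ)-2) with hj | hj
  · -- j very negative : all gb's vanish
    rw [gb_eq_zero (show (N:ℤ)+(j+1) < 0 ∨ ((2*N:ℕ):ℤ) < (N:ℤ)+(j+1) from Or.inl (by omega)),
      gb_eq_zero (show (N:ℤ)+j < 0 ∨ ((2*N:ℕ):ℤ) < (N:ℤ)+j from Or.inl (by omega)),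
      gb_eq_zero (show (N:ℤ)+(j-1) < 0 ∨ ((2*N:ℕ):ℤ) < (N:ℤ)+(j-1) from Or.inl (by omega))]
    simp
  rcases le_or_gt ((N:ℤ)+2) j with hj2 | hj2
  · -- j very positive : all gb's vanish
    rw [gb_eq_zero (show (N:ℤ)+(j+1) < 0 ∨ ((2*N:ℕ):ℤ) < (N:ℤ)+(j+1) from Or.inr (by push_cast; omega)),
      gb_eq_zero (show (N:ℤ)+j < 0 ∨ ((2*N:ℕ):ℤ) < (N:ℤ)+j from Or.inr (by push_cast; omega)),
      gb_eq_zero (show (N:ℤ)+(j-1) < 0 ∨ ((2*N:ℕ):ℤ) < (N:ℤ)+(j-1) from Or.inr (by push_cast; omega))]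
    simp
  rcases eq_or_lt_of_le (show -(N:ℤ)-1 ≤ j from by omega) with hjb | hjb
  · -- boundary j = -N-1
    have hj0 : (N:ℤ) + j = -1 := by omega
    have hj1 : (N:ℤ) + (j-1) = -2 := by omega
    have hj2' : (N:ℤ) + (j+1) = 0 := by omega
    rw [hj0, hj1, hj2', gb_col_zero,
      gb_eq_zero (show (-1:ℤ) < 0 ∨ ((2*N:ℕ):ℤ) < -1 from Or.inl (by omega)),
      gb_eq_zero (show (-2:ℤ) < 0 ∨ ((2*N:ℕ):ℤ) < -2 from Or.inl (by omega))]
    have m1 : (X:PowerSeries ℤ) ^ ((0:ℤ).toNat) * X ^ (T j) = X ^ N * X ^ (T (j+1)) := by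
      rw [← pow_add, ← pow_add]
      congr 1
      omega
    calc (X ^ ((0:ℤ).toNat) * 1 + 0 + X ^ (((2*N+1:ℕ):ℤ) + 1 - 0).toNat * (X ^ ((-1:ℤ)).toNat * 0 + 0)) * X ^ T j
        = X ^ ((0:ℤ).toNat) * X ^ (T j) := by ring
      _ = X ^ N * X ^ (T (j+1)) := m1
      _ = _ := by ring
  · -- main case : -N ≤ j ≤ N+1
    have he1 : ((N:ℤ)+(j+1)).toNat + T j = N + T (j+1) := by omega
    have he2 : (((2*N+1:ℕ):ℤ) + 1 - ((N:ℤ)+(j+1))).toNat + T j = (N+1) + T (j-1) := by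
      push_cast
      omega
    have he3 : (((2*N+1:ℕ):ℤ) + 1 - ((N:ℤ)+(j+1))).toNat + ((N:ℤ)+j).toNat = 2*N+1 := by
      push_cast
      omega
    have m1 : (X:PowerSeries ℤ) ^ (((N:ℤ)+(j+1)).toNat) * X ^ (T j)
        = X ^ N * X ^ (T (j+1)) := by
      rw [← pow_add, ← pow_add, he1]
    have m2 : (X:PowerSeries ℤ) ^ ((((2*N+1:ℕ):ℤ) + 1 - ((N:ℤ)+(j+1))).toNat) * X ^ (T j)
        = X ^ (N+1) * X ^ (T (j-1)) := by
      rw [← pow_add, ← pow_add, he2]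
    have m3 : (X:PowerSeries ℤ) ^ ((((2*N+1:ℕ):ℤ) + 1 - ((N:ℤ)+(j+1))).toNat)
          * X ^ (((N:ℤ)+j).toNat) = X ^ (2*N+1) := by
      rw [← pow_add, he3]
    linear_combination (gb (2*N) ((N:ℤ)+(j+1))) * m1 + (gb (2*N) ((N:ℤ)+(j-1))) * m2
      + (gb (2*N) ((N:ℤ)+j) * X ^ (T j)) * m3
/-! ### The finite Jacobi-type sum -/

def S (M N : ℕ) : PowerSeries ℤ := ∑ j ∈ Finset.Icc (-(M:ℤ)) (M:ℤ), F N j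

lemma sum_F_ext {N : ℕ} {a b : ℤ} (ha : a ≤ -(N:ℤ)) (hb : (N:ℤ) ≤ b) :
    ∑ j ∈ Finset.Icc a b, F N j = ∑ j ∈ Finset.Icc (-(N:ℤ)) (N:ℤ), F N j := by
  symm
  apply Finset.sum_subset
  · intro x hx
    rw [Finset.mem_Icc] at hx ⊢
    omega
  · intro x hx hx'
    rw [Finset.mem_Icc] at hx hx'
    apply F_eq_zero
    omega

lemma sum_F_shift {N M : ℕ} (c : ℤ) :
    ∑ j ∈ Finset.Icc (-(M:ℤ)) (M:ℤ), F N (j + c) =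
      ∑ j ∈ Finset.Icc (-(M:ℤ) + c) ((M:ℤ) + c), F N j := by
  rw [← Finset.map_add_right_Icc, Finset.sum_map]
  rfl

lemma S_zero (M : ℕ) : S M 0 = 1 := by
  rw [S]
  rw [Finset.sum_eq_single_of_mem 0 (by rw [Finset.mem_Icc]; omega)]
  · rw [F, T_zero, pow_zero, mul_one]
    norm_num
    exact gb_col_zero 0
  · intro b _ hb
    rw [F, mul_comm, gb_zero_def, if_neg (by omega), mul_zero]

lemma S_step {M N : ℕ} (hNM : N < M) :
    S M (N+1) = (1 + X^N) * (1 + X^(N+1)) * S M N := by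
  have key : ∀ c : ℤ, -(M:ℤ) + c ≤ -(N:ℤ) → (N:ℤ) ≤ (M:ℤ) + c →
      ∑ j ∈ Finset.Icc (-(M:ℤ)) (M:ℤ), F N (j + c) = S M N := by
    intro c h1 h2
    rw [sum_F_shift, sum_F_ext h1 h2, S]
    exact (sum_F_ext (by omega) (by omega)).symm
  rw [S]
  have expand : ∀ j ∈ Finset.Icc (-(M:ℤ)) (M:ℤ), F (N+1) j =
      (1 + X^(2*N+1)) * F N j + X^(N+1) * F N (j + (-1)) + X^N * F N (j + 1) := by
    intro j _
    rw [PJ]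
    norm_num [sub_eq_add_neg]
  rw [Finset.sum_congr rfl expand, Finset.sum_add_distrib, Finset.sum_add_distrib,
    ← Finset.mul_sum, ← Finset.mul_sum, ← Finset.mul_sum]
  rw [key (-1) (by omega) (by omega), key 1 (by omega) (by omega)]
  have : (∑ j ∈ Finset.Icc (-(M:ℤ)) (M:ℤ), F N j) = S M N := rfl
  rw [this]
  ring

lemma S_closed {M N : ℕ} (h : N ≤ M) :
    S M N = ∏ k ∈ range N, ((1 + (X:PowerSeries ℤ)^k) * (1 + X^(k+1))) := by
  induction N with
  | zero => rw [S_zero]; simp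
  | succ N ih =>
    rw [S_step (by omega), ih (by omega), Finset.prod_range_succ]
    ring
/-! ### Products and inverse series -/

def DInv (d : ℕ) : PowerSeries ℤ := PowerSeries.mk fun m => if d ∣ m then 1 else 0

lemma DInv_mul {d : ℕ} (hd : 0 < d) : (1 - X^d) * DInv d = 1 := by
  have h0 : (1 - X^d) * DInv d = DInv d - DInv d * X^d := by ring
  rw [h0]
  ext n
  rw [map_sub, coeff_mul_X_pow']
  rw [show (coeff n) (DInv d) = if d ∣ n then 1 else 0 from coeff_mk _ _]
  rcases Nat.eq_zero_or_pos n with rfl | hn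
  · rw [if_pos (dvd_zero d), if_neg (show ¬ d ≤ 0 by omega)]
    simp
  · rw [coeff_one, if_neg (show ¬ n = 0 by omega)]
    rcases le_or_gt d n with h | h
    · rw [if_pos h,
        show (coeff (n-d)) (DInv d) = if d ∣ (n-d) then 1 else 0 from coeff_mk _ _]
      have heq : (d ∣ n) ↔ (d ∣ n - d) := by
        constructor
        · intro hdn; exact Nat.dvd_sub hdn dvd_rfl
        · intro hdn
          have h2 := Nat.sub_add_cancel h
          have h3 := Nat.dvd_add hdn (dvd_refl d)
          rwa [h2] at h3
      by_cases hdn : d ∣ n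
      · rw [if_pos hdn, if_pos (heq.mp hdn)]; ring
      · rw [if_neg hdn, if_neg (fun hh => hdn (heq.mpr hh))]; ring
    · rw [if_neg (show ¬ d ≤ n by omega),
        if_neg (fun hdvd => by have := Nat.le_of_dvd hn hdvd; omega)]
      ring

def Pq (L : ℕ) : PowerSeries ℤ := ∏ i ∈ range L, (1 - X^(i+1))
def PqInv (L : ℕ) : PowerSeries ℤ := ∏ i ∈ range L, DInv (i+1)
def Aodd (L : ℕ) : PowerSeries ℤ := ∏ k ∈ range L, (1 - X^(2*k+1))
def Bev (L : ℕ) : PowerSeries ℤ := ∏ k ∈ range L, (1 - X^(2*k+2))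
def Eprod (L : ℕ) : PowerSeries ℤ := ∏ k ∈ range L, (1 + X^(k+1))

lemma Pq_mul_PqInv (L : ℕ) : Pq L * PqInv L = 1 := by
  rw [Pq, PqInv, ← Finset.prod_mul_distrib]
  rw [Finset.prod_congr rfl (fun i _ => DInv_mul (Nat.succ_pos i))]
  exact Finset.prod_const_one
/-! ### Telescoping for Gaussian binomials -/

lemma gb_step_relation {M k : ℕ} (hk : k < M) :
    (1 - X^(k+1)) * gb M ((k:ℤ)+1) = (1 - X^(M-k)) * gb M (k:ℤ) := by
  have h1 := gb_succ_def M ((k:ℤ)+1)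
  have h2 := gb_rule2 M ((k:ℤ)+1)
  have he : (((M:ℕ):ℤ)+1-((k:ℤ)+1)).toNat = M - k := by omega
  have hk1 : (((k:ℤ)+1)).toNat = k + 1 := by omega
  have hi : (k:ℤ)+1-1 = (k:ℤ) := by ring
  rw [he, hi] at h1
  rw [hk1, hi] at h2
  linear_combination h2 - h1

lemma gb_telescope {M k : ℕ} (hk : k ≤ M) :
    Pq k * gb M (k:ℤ) = ∏ i ∈ range k, (1 - X^(M-i)) := by
  induction k with
  | zero => simp [Pq, gb_col_zero]
  | succ k ih =>
    have hcast : ((k+1:ℕ):ℤ) = (k:ℤ)+1 := by push_cast; ring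
    rw [Pq, Finset.prod_range_succ, ← Pq, hcast]
    calc Pq k * (1 - X^(k+1)) * gb M ((k:ℤ)+1)
        = Pq k * ((1 - X^(k+1)) * gb M ((k:ℤ)+1)) := by ring
      _ = Pq k * ((1 - X^(M-k)) * gb M (k:ℤ)) := by rw [gb_step_relation (by omega)]
      _ = (1 - X^(M-k)) * (Pq k * gb M (k:ℤ)) := by ring
      _ = (1 - X^(M-k)) * ∏ i ∈ range k, (1 - X^(M-i)) := by rw [ih (by omega)]
      _ = _ := by rw [Finset.prod_range_succ]; ring

/-! ### Truncated-equality facts for the basic series -/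

lemma TEq_one_sub_pow {m d : ℕ} (hd : m < d) : TEq m (1 - X^d) 1 := by
  intro i hi
  rw [map_sub, coeff_X_pow, if_neg (by omega), sub_zero]

lemma TEq_one_add_pow {m d : ℕ} (hd : m < d) : TEq m (1 + X^d) 1 := by
  intro i hi
  rw [map_add, coeff_X_pow, if_neg (by omega), add_zero]

lemma TEq_DInv_one {m d : ℕ} (hd : m < d) : TEq m (DInv d) 1 := by
  intro i hi
  rw [show (coeff i) (DInv d) = if d ∣ i then 1 else 0 from coeff_mk _ _]
  rcases Nat.eq_zero_or_pos i with rfl | hp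
  · rw [if_pos (dvd_zero d)]; simp
  · rw [if_neg (fun hdvd => by have := Nat.le_of_dvd hp hdvd; omega), coeff_one,
      if_neg (by omega)]

lemma gb_TEq_PqInv {m M k : ℕ} (hk : k ≤ M) (hm : m + k ≤ M) :
    TEq m (gb M (k:ℤ)) (PqInv k) := by
  apply TEq.inv_unique (Pq_mul_PqInv k)
  rw [gb_telescope hk]
  apply TEq.prod_one
  intro i hi
  rw [Finset.mem_range] at hi
  exact TEq_one_sub_pow (by omega)

lemma PqInv_TEq {m L k : ℕ} (hL : L ≤ k) (hm : m ≤ L) :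
    TEq m (PqInv k) (PqInv L) := by
  have : PqInv k = PqInv L * ∏ i ∈ range (k - L), DInv (L + i + 1) := by
    rw [PqInv, PqInv, ← Finset.prod_range_add, Nat.add_sub_cancel' hL]
  rw [this]
  have h2 : TEq m (∏ i ∈ range (k - L), DInv (L + i + 1)) 1 :=
    TEq.prod_one fun i _ => TEq_DInv_one (by omega)
  have := TEq.mul (TEq.refl (PqInv L)) h2
  simpa using this

lemma Eprod_TEq {m L k : ℕ} (hL : L ≤ k) (hm : m ≤ L) :
    TEq m (Eprod k) (Eprod L) := by
  have : Eprod k = Eprod L * ∏ i ∈ range (k - L), (1 + X^(L + i + 1)) := by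
    rw [Eprod, Eprod, ← Finset.prod_range_add, Nat.add_sub_cancel' hL]
  rw [this]
  have h2 : TEq m (∏ i ∈ range (k - L), (1 + (X:PowerSeries ℤ)^(L + i + 1))) 1 :=
    TEq.prod_one fun i _ => TEq_one_add_pow (by omega)
  have := TEq.mul (TEq.refl (Eprod L)) h2
  simpa using this
/-! ### The theta series ψ -/

open scoped Classical in
def psi : PowerSeries ℤ := PowerSeries.mk fun i => if ∃ k : ℕ, T (k:ℤ) = i then 1 else 0

open scoped Classical in
lemma coeff_psi (i : ℕ) : coeff i psi = if ∃ k : ℕ, T (k:ℤ) = i then 1 else 0 :=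
  coeff_mk _ _

lemma sum_Icc_Xpow_TEq {m : ℕ} {b : ℤ} (hb : (m:ℤ) ≤ b) :
    TEq m (∑ j ∈ Finset.Icc (0:ℤ) b, (X:PowerSeries ℤ)^(T j)) psi := by
  classical
  intro i hi
  rw [map_sum, coeff_psi]
  simp_rw [coeff_X_pow]
  by_cases hex : ∃ k : ℕ, T (k:ℤ) = i
  · obtain ⟨k0, hk0⟩ := hex
    have hk0b : (k0:ℤ) ≤ b := by
      have := T_ge_self k0
      omega
    rw [if_pos ⟨k0, hk0⟩]
    rw [Finset.sum_eq_single_of_mem (k0:ℤ) (by rw [Finset.mem_Icc]; omega)]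
    · rw [if_pos hk0.symm]
    · intro j hj hne
      rw [Finset.mem_Icc] at hj
      rw [if_neg]
      intro hij
      have hjt : j = ((j.toNat : ℕ) : ℤ) := by omega
      have : T ((j.toNat : ℕ) : ℤ) = T ((k0 : ℕ) : ℤ) := by
        rw [← hjt, ← hij, hk0]
      have := T_strictMono.injective this
      omega
  · rw [if_neg hex]
    apply Finset.sum_eq_zero
    intro j hj
    rw [Finset.mem_Icc] at hj
    rw [if_neg]
    intro hij
    exact hex ⟨j.toNat, by rw [show ((j.toNat:ℕ):ℤ) = j by omega]; omega⟩

lemma sum_Icc_Xpow_full {m M : ℕ} (hM : m + 1 ≤ M) :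
    TEq m (∑ j ∈ Finset.Icc (-(M:ℤ)) (M:ℤ), (X:PowerSeries ℤ)^(T j)) (psi + psi) := by
  have hsplit : Finset.Icc (-(M:ℤ)) (M:ℤ)
      = Finset.Icc (-(M:ℤ)) (-1) ∪ Finset.Icc (0:ℤ) (M:ℤ) := by
    ext x
    simp only [Finset.mem_Icc, Finset.mem_union]
    omega
  have hdisj : Disjoint (Finset.Icc (-(M:ℤ)) (-1)) (Finset.Icc (0:ℤ) (M:ℤ)) := by
    rw [Finset.disjoint_left]
    intro x hx hx'
    rw [Finset.mem_Icc] at hx hx'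
    omega
  rw [hsplit, Finset.sum_union hdisj]
  have hneg : ∑ j ∈ Finset.Icc (-(M:ℤ)) (-1), (X:PowerSeries ℤ)^(T j)
      = ∑ j ∈ Finset.Icc (0:ℤ) ((M:ℤ)-1), (X:PowerSeries ℤ)^(T j) := by
    apply Finset.sum_nbij' (i := fun j => -j-1) (j := fun j => -j-1)
    · intro a ha
      rw [Finset.mem_Icc] at ha ⊢
      omega
    · intro a ha
      rw [Finset.mem_Icc] at ha ⊢
      omega
    · intro a _
      ring
    · intro a _
      ring
    · intro a _
      rw [T_neg]
  rw [hneg]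
  exact TEq.add (sum_Icc_Xpow_TEq (by omega)) (sum_Icc_Xpow_TEq (by omega))

/-! ### Exact product identities -/

lemma E_mul_Pq (L : ℕ) : Eprod L * Pq L = Bev L := by
  rw [Eprod, Pq, Bev, ← Finset.prod_mul_distrib]
  apply Finset.prod_congr rfl
  intro i _
  have hx : (X:PowerSeries ℤ)^(i+1) * X^(i+1) = X^(2*i+2) := by
    rw [← pow_add]
    congr 1
    omega
  calc (1 + (X:PowerSeries ℤ)^(i+1)) * (1 - X^(i+1)) = 1 - X^(i+1) * X^(i+1) := by ring
    _ = 1 - X^(2*i+2) := by rw [hx]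

lemma A_mul_B (L : ℕ) : Aodd L * Bev L = Pq (2*L) := by
  induction L with
  | zero => simp [Aodd, Bev, Pq]
  | succ L ih =>
    have e1 : Aodd (L+1) = Aodd L * (1 - X^(2*L+1)) := by
      rw [Aodd, Aodd, Finset.prod_range_succ]
    have e2 : Bev (L+1) = Bev L * (1 - X^(2*L+2)) := by
      rw [Bev, Bev, Finset.prod_range_succ]
    have e3 : Pq (2*(L+1)) = Pq (2*L) * (1 - X^(2*L+1)) * (1 - X^(2*L+2)) := by
      rw [show 2*(L+1) = (2*L+1)+1 from by ring, Pq, Finset.prod_range_succ,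
        Finset.prod_range_succ, ← Pq, show 2*L+1+1 = 2*L+2 from by omega]
    rw [e1, e2, e3, ← ih]
    ring

lemma constCoeff_Pq (L : ℕ) : constantCoeff (Pq L) = 1 := by
  rw [Pq, map_prod]
  apply Finset.prod_eq_one
  intro i _
  rw [map_sub, map_one, map_pow, constantCoeff_X, zero_pow (Nat.succ_ne_zero i), sub_zero]

lemma Pq_ne_zero (L : ℕ) : Pq L ≠ 0 := by
  intro h
  have := constCoeff_Pq L
  rw [h, map_zero] at this
  norm_num at this

lemma EA_tail (L : ℕ) : Eprod L * Aodd L = ∏ i ∈ range L, (1 - X^(L+i+1)) := by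
  apply mul_right_cancel₀ (Pq_ne_zero L)
  have h1 : Eprod L * Aodd L * Pq L = Pq (2*L) := by
    rw [show Eprod L * Aodd L * Pq L = Aodd L * (Eprod L * Pq L) from by ring,
      E_mul_Pq, A_mul_B]
  have h2 : (∏ i ∈ range L, (1 - (X:PowerSeries ℤ)^(L+i+1))) * Pq L = Pq (2*L) := by
    rw [Pq, Pq, show 2*L = L + L from by ring, Finset.prod_range_add]
    ring
  rw [h1, h2]

/-! ### Gauss' identity, truncated form -/

theorem gauss_TEq (m : ℕ) : TEq m (psi * Aodd m) (Bev m) := by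
  set L := m with hL
  set N := 2*m+2 with hN
  set M := 2*m+3 with hM
  -- Step 1 : S M N ≈ (∑ X^{T j}) * PqInv L
  have h1 : TEq m (S M N) ((∑ j ∈ Finset.Icc (-(M:ℤ)) (M:ℤ), (X:PowerSeries ℤ)^(T j)) * PqInv L) := by
    rw [S, Finset.sum_mul]
    apply TEq.sum
    intro j hj
    rcases le_or_gt (T j) m with hTj | hTj
    · -- identify gb with PqInv
      have hjb := T_natAbs_le m hTj
      have hk : ((N:ℤ) + j).toNat ≤ 2*N := by omega
      have hcast : ((((N:ℤ) + j).toNat : ℕ) : ℤ) = (N:ℤ) + j := by omega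
      have hgb : TEq m (gb (2*N) ((N:ℤ)+j)) (PqInv (((N:ℤ) + j).toNat)) := by
        have := gb_TEq_PqInv (m := m) (M := 2*N) (k := ((N:ℤ) + j).toNat) (by omega) (by omega)
        rwa [hcast] at this
      have hPq : TEq m (PqInv (((N:ℤ) + j).toNat)) (PqInv L) := PqInv_TEq (by omega) (by omega)
      have := TEq.mul (hgb.trans hPq) (TEq.refl ((X:PowerSeries ℤ)^(T j)))
      rw [F]
      exact this.trans (TEq.of_eq (mul_comm _ _))
    · -- both sides have order > m
      intro i hi
      rw [F, show (X:PowerSeries ℤ)^(T j) * PqInv L = PqInv L * X^(T j) from mul_comm _ _,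
        coeff_mul_X_pow', coeff_mul_X_pow', if_neg (by omega), if_neg (by omega)]
  -- Step 2 : the X-power sum is ≈ psi + psi
  have h2 : TEq m ((∑ j ∈ Finset.Icc (-(M:ℤ)) (M:ℤ), (X:PowerSeries ℤ)^(T j)) * PqInv L)
      ((psi + psi) * PqInv L) :=
    TEq.mul (sum_Icc_Xpow_full (by omega)) (TEq.refl _)
  -- Step 3 : closed form of S
  have h3 : S M N = (Eprod (N-1) * (1 + 1)) * Eprod N := by
    rw [S_closed (by omega), Finset.prod_mul_distrib]
    have ha : ∏ k ∈ range N, (1 + (X:PowerSeries ℤ)^k) = Eprod (N-1) * (1+1) := by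
      rw [show N = (N-1)+1 from by omega, Finset.prod_range_succ', Eprod]
      norm_num
    have hb : ∏ k ∈ range N, (1 + (X:PowerSeries ℤ)^(k+1)) = Eprod N := by
      rw [Eprod]
    rw [ha, hb]
  have h4 : TEq m ((Eprod (N-1) * (1+1)) * Eprod N) ((Eprod L * (1+1)) * Eprod L) :=
    TEq.mul (TEq.mul (Eprod_TEq (by omega) (by omega)) (TEq.refl _))
      (Eprod_TEq (by omega) (by omega))
  -- combine : (psi+psi) * PqInv L ≈ (E*(1+1))*E  i.e. cancel the factor 2 coefficientwise
  have h5 : TEq m ((psi + psi) * PqInv L) ((Eprod L * (1+1)) * Eprod L) := by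
    have hS := (h1.symm.trans (TEq.of_eq h3)).symm
    exact (h2.symm.trans h1.symm).trans ((TEq.of_eq h3).trans h4)
  have h6 : TEq m (psi * PqInv L) (Eprod L * Eprod L) := by
    intro i hi
    have := h5 i hi
    rw [show (psi + psi) * PqInv L = psi * PqInv L + psi * PqInv L from by ring,
      show (Eprod L * (1+1)) * Eprod L = Eprod L * Eprod L + Eprod L * Eprod L from by ring,
      map_add, map_add] at this
    omega
  -- multiply by Pq L
  have h7 : TEq m psi (Eprod L * Bev L) := by
    have := TEq.mul h6 (TEq.refl (Pq L))
    rw [show psi * PqInv L * Pq L = psi * (Pq L * PqInv L) from by ring, Pq_mul_PqInv,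
      mul_one, show Eprod L * Eprod L * Pq L = Eprod L * (Eprod L * Pq L) from by ring,
      E_mul_Pq] at this
    exact this
  -- multiply by Aodd L
  have h8 : TEq m (psi * Aodd L) (Bev L) := by
    have h9 := TEq.mul h7 (TEq.refl (Aodd L))
    rw [show Eprod L * Bev L * Aodd L = (Eprod L * Aodd L) * Bev L from by ring, EA_tail] at h9
    have h10 : TEq m ((∏ i ∈ range L, (1 - (X:PowerSeries ℤ)^(L+i+1))) * Bev L) (Bev L) := by
      have := TEq.mul (TEq.prod_one (s := range L)
        (f := fun i => 1 - (X:PowerSeries ℤ)^(L+i+1))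
        (fun i hi => by
          rw [Finset.mem_range] at hi
          exact TEq_one_sub_pow (show m < L+i+1 by omega))) (TEq.refl (Bev L))
      simpa using this
    exact h9.trans h10
  exact h8
/-! ### Triangular-number predicate -/

def triN (t : ℕ) : Prop := ∃ m : ℕ, 1 ≤ m ∧ 2 * t = m * (m + 1)

lemma T_nat (k : ℕ) : 2 * T (k:ℤ) = k * (k+1) := by
  have h := T_two_mul (k:ℤ)
  zify
  push_cast at h ⊢
  linarith

lemma psi_pred_iff (i : ℕ) : (∃ k : ℕ, T (k:ℤ) = i) ↔ (i = 0 ∨ triN i) := by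
  constructor
  · rintro ⟨k, hk⟩
    rcases Nat.eq_zero_or_pos k with rfl | hkpos
    · left; rw [← hk]; rfl
    · right
      exact ⟨k, hkpos, by rw [← hk]; exact T_nat k⟩
  · rintro (rfl | ⟨m, hm, hmi⟩)
    · exact ⟨0, rfl⟩
    · refine ⟨m, ?_⟩
      have := T_nat m
      omega

/-! ### The signed composition count -/

open scoped Classical in
def acomp (n : ℕ) : ℤ :=
  ∑ c ∈ Finset.univ.filter (fun c : Composition n => ∀ i ∈ c.blocks, triN i),
    (-1 : ℤ) ^ c.length

instance : Unique (Composition 0) where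
  default := ⟨[], by simp, by simp⟩
  uniq := by
    intro c
    apply Composition.ext
    have h := c.blocks_sum
    cases hb : c.blocks with
    | nil => rfl
    | cons x t =>
      exfalso
      have hx : 0 < x := c.blocks_pos (by rw [hb]; exact List.mem_cons_self)
      rw [hb] at h
      simp only [List.sum_cons] at h
      omega

open scoped Classical in
lemma acomp_zero : acomp 0 = 1 := by
  rw [acomp]
  rw [Finset.filter_true_of_mem (fun c _ => by
    intro i hi
    have : c = default := Unique.uniq _ c
    subst this
    simp only [default] at hi
    exact absurd hi (List.not_mem_nil))]
  rw [show (Finset.univ : Finset (Composition 0)) = {default} from by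
    apply Finset.eq_singleton_iff_unique_mem.mpr
    exact ⟨Finset.mem_univ _, fun x _ => Unique.uniq _ x⟩]
  rw [Finset.sum_singleton]
  have : (default : Composition 0).length = 0 := rfl
  rw [this, pow_zero]

lemma comp_blocks_ne_nil {n : ℕ} (hn : 1 ≤ n) (c : Composition n) : c.blocks ≠ [] := by
  intro h
  have := c.blocks_sum
  rw [h] at this
  simp at this
  omega

open scoped Classical in
lemma acomp_rec {n : ℕ} (hn : 1 ≤ n) :
    acomp n = ∑ t ∈ (Finset.Icc 1 n).filter triN, -(acomp (n - t)) := by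
  have hrhs : ∑ t ∈ (Finset.Icc 1 n).filter triN, -(acomp (n - t))
      = ∑ x ∈ ((Finset.Icc 1 n).filter triN).sigma
          (fun t => Finset.univ.filter (fun c : Composition (n - t) => ∀ i ∈ c.blocks, triN i)),
          -((-1 : ℤ) ^ x.2.length) := by
    rw [Finset.sum_sigma]
    apply Finset.sum_congr rfl
    intro t _
    rw [acomp, ← Finset.sum_neg_distrib]
  rw [hrhs, acomp]
  symm
  refine Finset.sum_bij'
    (i := fun (x : Σ t : ℕ, Composition (n - t)) hx =>
      (⟨x.1 :: x.2.blocks, by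
        intro i hi
        rcases List.mem_cons.mp hi with rfl | hi'
        · simp only [Finset.mem_sigma, Finset.mem_filter, Finset.mem_Icc] at hx
          omega
        · exact x.2.blocks_pos hi', by
        simp only [List.sum_cons, x.2.blocks_sum]
        simp only [Finset.mem_sigma, Finset.mem_filter, Finset.mem_Icc] at hx
        omega⟩ : Composition n))
    (j := fun (c : Composition n) hc =>
      ⟨c.blocks.head (comp_blocks_ne_nil hn c),
        ⟨c.blocks.tail, fun hi => c.blocks_pos (List.mem_of_mem_tail hi), by
          have hsum := c.blocks_sum
          have hht := List.cons_head_tail (comp_blocks_ne_nil hn c)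
          have h2 : (c.blocks.head (comp_blocks_ne_nil hn c) :: c.blocks.tail).sum
              = c.blocks.head (comp_blocks_ne_nil hn c) + c.blocks.tail.sum := List.sum_cons
          rw [hht] at h2
          omega⟩⟩)
    ?hi ?hj ?left ?right ?vals
  case hi =>
    intro x hx
    simp only [Finset.mem_sigma, Finset.mem_filter, Finset.mem_Icc] at hx
    simp only [Finset.mem_filter, Finset.mem_univ, true_and]
    intro i hi
    rcases List.mem_cons.mp hi with rfl | hi'
    · exact hx.1.2
    · exact hx.2.2 i hi'
  case hj =>
    intro c hc
    simp only [Finset.mem_filter, Finset.mem_univ, true_and] at hc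
    simp only [Finset.mem_sigma, Finset.mem_filter, Finset.mem_Icc, Finset.mem_univ, true_and]
    have hhead : c.blocks.head (comp_blocks_ne_nil hn c) ∈ c.blocks :=
      List.head_mem _
    refine ⟨⟨⟨c.blocks_pos hhead, ?_⟩, hc _ hhead⟩, fun i hi => hc i (List.mem_of_mem_tail hi)⟩
    have hsum := c.blocks_sum
    have hht := List.cons_head_tail (comp_blocks_ne_nil hn c)
    have h2 : (c.blocks.head (comp_blocks_ne_nil hn c) :: c.blocks.tail).sum
        = c.blocks.head (comp_blocks_ne_nil hn c) + c.blocks.tail.sum := List.sum_cons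
    rw [hht] at h2
    omega
  case left =>
    intro x hx
    rfl
  case right =>
    intro c hc
    apply Composition.ext
    exact List.cons_head_tail (comp_blocks_ne_nil hn c)
  case vals =>
    intro x hx
    show -((-1 : ℤ) ^ x.2.length) = (-1 : ℤ) ^ (List.length (x.1 :: x.2.blocks))
    rw [List.length_cons, pow_succ]
    have : x.2.length = x.2.blocks.length := rfl
    rw [this]
    ring
/-! ### The composition generating function is the inverse of ψ -/

open scoped Classical in
lemma psi_mul_acomp : psi * PowerSeries.mk (fun k => acomp k) = 1 := by
  ext n
  rw [coeff_mul, Finset.Nat.sum_antidiagonal_eq_sum_range_succ_mk]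
  simp_rw [coeff_psi, coeff_mk]
  rcases Nat.eq_zero_or_pos n with rfl | hn
  · rw [Finset.sum_range_one]
    rw [if_pos ⟨0, rfl⟩]
    simp [acomp_zero]
  · rw [coeff_one, if_neg (by omega), Finset.sum_range_succ']
    have h0 : (if ∃ k : ℕ, T (k:ℤ) = (0:ℕ) then (1:ℤ) else 0) * acomp (n - 0) = acomp n := by
      rw [if_pos ⟨0, rfl⟩, one_mul, Nat.sub_zero]
    rw [h0]
    have hmain : (∑ k ∈ range n,
          (if ∃ j : ℕ, T (j:ℤ) = (k+1 : ℕ) then (1:ℤ) else 0) * acomp (n - (k+1)))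
        = ∑ t ∈ (Finset.Icc 1 n).filter triN, acomp (n - t) := by
      have step1 : (∑ k ∈ range n,
            (if ∃ j : ℕ, T (j:ℤ) = (k+1 : ℕ) then (1:ℤ) else 0) * acomp (n - (k+1)))
          = ∑ t ∈ Finset.Icc 1 n, (if triN t then (1:ℤ) else 0) * acomp (n - t) := by
        refine Finset.sum_nbij' (i := fun k => k + 1) (j := fun t => t - 1) ?_ ?_ ?_ ?_ ?_
        · intro k hk
          rw [Finset.mem_range] at hk
          rw [Finset.mem_Icc]
          omega
        · intro t ht
          rw [Finset.mem_Icc] at ht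
          rw [Finset.mem_range]
          omega
        · intro k _
          omega
        · intro t ht
          rw [Finset.mem_Icc] at ht
          omega
        · intro k _
          congr 1
          rw [show (∃ j : ℕ, T (j:ℤ) = (k+1 : ℕ)) ↔ ((k+1 = 0) ∨ triN (k+1)) from
            psi_pred_iff (k+1)]
          simp
      rw [step1, Finset.sum_filter]
      apply Finset.sum_congr rfl
      intro t _
      split_ifs <;> ring
    rw [hmain]
    have := acomp_rec hn
    rw [Finset.sum_neg_distrib] at this
    omega
/-! ### Archive partition GF machinery (adapted from Archive/Wiedijk100Theorems/Partition.lean) -/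

open scoped Classical

universe u
variable {α : Type*}

/-- A convenience constructor for the power series whose coefficients indicate a subset. -/
def indicatorSeries (α : Type*) [Semiring α] (s : Set ℕ) : PowerSeries α :=
  PowerSeries.mk fun n => if n ∈ s then 1 else 0

theorem coeff_indicator (s : Set ℕ) [Semiring α] (n : ℕ) :
    coeff n (indicatorSeries α s) = if n ∈ s then 1 else 0 :=
  coeff_mk _ _

theorem coeff_indicator_pos (s : Set ℕ) [Semiring α] (n : ℕ) (h : n ∈ s) :
    coeff n (indicatorSeries α s) = 1 := by rw [coeff_indicator, if_pos h]

theorem coeff_indicator_neg (s : Set ℕ) [Semiring α] (n : ℕ) (h : n ∉ s) :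
    coeff n (indicatorSeries α s) = 0 := by rw [coeff_indicator, if_neg h]

theorem constantCoeff_indicator (s : Set ℕ) [Semiring α] :
    constantCoeff (indicatorSeries α s) = if 0 ∈ s then 1 else 0 :=
  rfl

theorem two_series (i : ℕ) [Semiring α] :
    1 + (X : PowerSeries α) ^ i.succ = indicatorSeries α {0, i.succ} := by
  ext n
  simp only [coeff_indicator, coeff_one, coeff_X_pow, Set.mem_insert_iff, Set.mem_singleton_iff,
    map_add]
  cases' n with d
  · simp [(Nat.succ_ne_zero i).symm]
  · simp [Nat.succ_ne_zero d]

theorem num_series' [Field α] (i : ℕ) :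
    (1 - (X : PowerSeries α) ^ (i + 1))⁻¹ = indicatorSeries α {k | i + 1 ∣ k} := by
  rw [PowerSeries.inv_eq_iff_mul_eq_one]
  · ext n
    cases n with
    | zero => simp [mul_sub, zero_pow, constantCoeff_indicator]
    | succ n =>
      simp only [coeff_one, if_false, mul_sub, mul_one, coeff_indicator,
        LinearMap.map_sub, reduceCtorEq]
      simp_rw [coeff_mul, coeff_X_pow, coeff_indicator, @boole_mul _ _ _ _]
      erw [@Finset.sum_ite _ _ _ _ (fun x : ℕ × ℕ => x.1 ∈ {k | i + 1 ∣ k}) (fun _ => Classical.propDecidable _), sum_ite]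
      simp_rw [@filter_filter _ _ _ _ _, sum_const_zero, add_zero, sum_const, nsmul_eq_mul, mul_one,
        sub_eq_iff_eq_add, zero_add]
      symm
      split_ifs with h
      · suffices #{a ∈ antidiagonal (n + 1) | i + 1 ∣ a.fst ∧ a.snd = i + 1} = 1 by
          simp only [Set.mem_setOf_eq]; convert congr_arg ((↑) : ℕ → α) this; norm_cast
        rw [card_eq_one]
        cases' h with p hp
        refine ⟨((i + 1) * (p - 1), i + 1), ?_⟩
        ext ⟨a₁, a₂⟩
        simp only [mem_filter, Prod.mk_inj, HasAntidiagonal.mem_antidiagonal, mem_singleton]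
        constructor
        · rintro ⟨a_left, ⟨a, rfl⟩, rfl⟩
          refine ⟨?_, rfl⟩
          rw [Nat.mul_sub_left_distrib, ← hp, ← a_left, mul_one, Nat.add_sub_cancel]
        · rintro ⟨rfl, rfl⟩
          match p with
          | 0 => rw [mul_zero] at hp; cases hp
          | p + 1 => rw [hp]; simp [mul_add]
      · suffices #{a ∈ antidiagonal (n + 1) | i + 1 ∣ a.fst ∧ a.snd = i + 1} = 0 by
          simp only [Set.mem_setOf_eq]; convert congr_arg ((↑) : ℕ → α) this; norm_cast
        rw [card_eq_zero]
        apply eq_empty_of_forall_notMem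
        simp only [Prod.forall, mem_filter, not_and, HasAntidiagonal.mem_antidiagonal]
        rintro _ h₁ h₂ ⟨a, rfl⟩ rfl
        apply h
        simp [← h₂]
  · simp [zero_pow]


-- The main workhorse of the partition theorem proof.
theorem partialGF_prop (α : Type*) [CommSemiring α] (n : ℕ) (s : Finset ℕ) (hs : ∀ i ∈ s, 0 < i)
    (c : ℕ → Set ℕ) (hc : ∀ i, i ∉ s → 0 ∈ c i) :
    #{p : n.Partition | (∀ j, p.parts.count j ∈ c j) ∧ ∀ j ∈ p.parts, j ∈ s} =
      coeff n (∏ i ∈ s, indicatorSeries α ((· * i) '' c i)) := by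
  simp_rw [coeff_prod, coeff_indicator, prod_boole, sum_boole]
  apply congr_arg
  simp only [mem_univ, forall_true_left, not_and, not_forall, exists_prop,
    Set.mem_image, not_exists]
  set φ : (a : Nat.Partition n) →
    a ∈ filter (fun p ↦ (∀ (j : ℕ), Multiset.count j p.parts ∈ c j) ∧ ∀ j ∈ p.parts, j ∈ s) univ →
    ℕ →₀ ℕ := fun p _ => {
      toFun := fun i => Multiset.count i p.parts • i
      support := Finset.filter (fun i => i ≠ 0) p.parts.toFinset
      mem_support_toFun := fun a => by
        simp only [smul_eq_mul, ne_eq, mul_eq_zero, Multiset.count_eq_zero]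
        rw [not_or, not_not]
        simp only [Multiset.mem_toFinset, not_not, mem_filter] }
  refine Finset.card_bij φ ?_ ?_ ?_
  · intro a ha
    simp only [φ, not_forall, not_exists, not_and, exists_prop, mem_filter]
    rw [mem_finsuppAntidiag]
    dsimp only [ne_eq, smul_eq_mul, id_eq, eq_mpr_eq_cast, le_eq_subset, Finsupp.coe_mk]
    simp only [mem_univ, forall_true_left, not_and, not_forall, exists_prop,
      mem_filter, true_and] at ha
    refine ⟨⟨?_, fun i ↦ ?_⟩, fun i _ ↦ ⟨a.parts.count i, ha.1 i, rfl⟩⟩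
    · conv_rhs => simp [← a.parts_sum]
      rw [sum_multiset_count_of_subset _ s]
      · simp only [smul_eq_mul]
      · intro i
        simp only [Multiset.mem_toFinset, not_not, mem_filter]
        apply ha.2
    · simp only [ne_eq, Multiset.mem_toFinset, not_not, mem_filter, and_imp]
      exact fun hi _ ↦ ha.2 i hi
  · intro p₁ hp₁ p₂ hp₂ h
    apply Nat.Partition.ext
    simp only [true_and, mem_univ, mem_filter] at hp₁ hp₂
    ext i
    simp only [φ, ne_eq, Multiset.mem_toFinset, not_not, smul_eq_mul, Finsupp.mk.injEq] at h
    by_cases hi : i = 0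
    · rw [hi]
      rw [Multiset.count_eq_zero_of_notMem]
      · rw [Multiset.count_eq_zero_of_notMem]
        intro a; exact Nat.lt_irrefl 0 (hs 0 (hp₂.2 0 a))
      intro a; exact Nat.lt_irrefl 0 (hs 0 (hp₁.2 0 a))
    · rw [← mul_left_inj' hi]
      rw [funext_iff] at h
      exact h.2 i
  · simp only [φ, mem_filter, mem_finsuppAntidiag, mem_univ, exists_prop, true_and, and_assoc]
    rintro f ⟨hf, hf₃, hf₄⟩
    have hf' : f ∈ finsuppAntidiag s n := mem_finsuppAntidiag.mpr ⟨hf, hf₃⟩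
    simp only [mem_finsuppAntidiag] at hf'
    refine ⟨⟨∑ i ∈ s, Multiset.replicate (f i / i) i, ?_, ?_⟩, ?_, ?_, ?_⟩
    · intro i hi
      simp only [exists_prop, Multiset.mem_sum, mem_map, Function.Embedding.coeFn_mk] at hi
      rcases hi with ⟨t, ht, z⟩
      apply hs
      rwa [Multiset.eq_of_mem_replicate z]
    · simp_rw [Multiset.sum_sum, Multiset.sum_replicate, Nat.nsmul_eq_mul]
      rw [← hf'.1]
      refine sum_congr rfl fun i hi => Nat.div_mul_cancel ?_
      rcases hf₄ i hi with ⟨w, _, hw₂⟩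
      rw [← hw₂]
      exact dvd_mul_left _ _
    · intro i
      simp_rw [Multiset.count_sum', Multiset.count_replicate, sum_ite_eq']
      split_ifs with h
      · rcases hf₄ i h with ⟨w, hw₁, hw₂⟩
        rwa [← hw₂, Nat.mul_div_cancel _ (hs i h)]
      · exact hc _ h
    · intro i hi
      rw [Multiset.mem_sum] at hi
      rcases hi with ⟨j, hj₁, hj₂⟩
      rwa [Multiset.eq_of_mem_replicate hj₂]
    · ext i
      simp_rw [Multiset.count_sum', Multiset.count_replicate, sum_ite_eq']
      simp only [ne_eq, Multiset.mem_toFinset, not_not, smul_eq_mul, ite_mul,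
        zero_mul, Finsupp.coe_mk]
      split_ifs with h
      · apply Nat.div_mul_cancel
        rcases hf₄ i h with ⟨w, _, hw₂⟩
        apply Dvd.intro_left _ hw₂
      · apply symm
        rw [← Finsupp.notMem_support_iff]
        exact notMem_mono hf'.2 h

/-! ### Identification of the factors -/

lemma even_factor {i : ℕ} (_hi : 0 < i) :
    indicatorSeries ℤ ((· * i) '' Set.univ) = DInv i := by
  ext n
  rw [coeff_indicator, show coeff n (DInv i) = if i ∣ n then 1 else 0 from coeff_mk _ _]
  have hiff : (n ∈ (· * i) '' Set.univ) ↔ (i ∣ n) := by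
    constructor
    · rintro ⟨j, -, rfl⟩
      exact Dvd.intro_left j rfl
    · rintro ⟨c, rfl⟩
      exact ⟨c, Set.mem_univ c, mul_comm c i⟩
  by_cases h : i ∣ n
  · rw [if_pos (hiff.mpr h), if_pos h]
  · rw [if_neg (fun hh => h (hiff.mp hh)), if_neg h]

lemma odd_factor {i : ℕ} (hi : 0 < i) :
    indicatorSeries ℤ ((· * i) '' ({0,1} : Set ℕ)) = 1 + X^i := by
  have h2 := two_series (α := ℤ) (i-1)
  rw [show (i-1).succ = i from by omega] at h2
  have himg : ((· * i) '' ({0,1} : Set ℕ)) = ({0, i} : Set ℕ) := by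
    rw [Set.image_pair]
    simp
  rw [himg, ← h2]

def OddP (L : ℕ) : PowerSeries ℤ := ∏ k ∈ range L, (1 + X^(2*k+1))
def EvenP (L : ℕ) : PowerSeries ℤ := ∏ k ∈ range L, DInv (2*k+2)

lemma Bev_mul_EvenP (L : ℕ) : Bev L * EvenP L = 1 := by
  rw [Bev, EvenP, ← Finset.prod_mul_distrib]
  rw [Finset.prod_congr rfl (fun i _ => DInv_mul (show 0 < 2*i+2 by omega))]
  exact Finset.prod_const_one

lemma prod_range_TEq {m L k : ℕ} (f : ℕ → PowerSeries ℤ) (hLk : L ≤ k)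
    (hf : ∀ i, L ≤ i → TEq m (f i) 1) :
    TEq m (∏ i ∈ range k, f i) (∏ i ∈ range L, f i) := by
  have hsplit : ∏ i ∈ range k, f i = (∏ i ∈ range L, f i) * ∏ i ∈ range (k-L), f (L+i) := by
    rw [← Finset.prod_range_add, Nat.add_sub_cancel' hLk]
  rw [hsplit]
  have h2 : TEq m (∏ i ∈ range (k-L), f (L+i)) 1 :=
    TEq.prod_one fun i _ => hf _ (by omega)
  have := TEq.mul (TEq.refl (∏ i ∈ range L, f i)) h2
  simpa using this

/-! ### The pod generating function -/

lemma pod_count (n : ℕ) :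
    ((Finset.univ.filter
        (fun p : Nat.Partition n => ∀ i, Odd i → p.parts.count i ≤ 1)).card : ℤ)
      = coeff n (∏ i ∈ (range (n+1)).filter (fun i => 0 < i),
          (if Odd i then (1 + X^i : PowerSeries ℤ) else DInv i)) := by
  have key := partialGF_prop ℤ n ((range (n+1)).filter (fun i => 0 < i))
    (fun i hi => (Finset.mem_filter.mp hi).2)
    (fun i => if Odd i then ({0,1} : Set ℕ) else Set.univ)
    (fun i _ => by by_cases h : Odd i <;> simp [h])
  have hprod : (∏ i ∈ (range (n+1)).filter (fun i => 0 < i),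
        indicatorSeries ℤ ((· * i) '' (if Odd i then ({0,1} : Set ℕ) else Set.univ)))
      = ∏ i ∈ (range (n+1)).filter (fun i => 0 < i),
          (if Odd i then (1 + X^i : PowerSeries ℤ) else DInv i) := by
    apply Finset.prod_congr rfl
    intro i hi
    have hipos : 0 < i := (Finset.mem_filter.mp hi).2
    by_cases h : Odd i
    · rw [if_pos h, if_pos h, odd_factor hipos]
    · rw [if_neg h, if_neg h, even_factor hipos]
  rw [hprod] at key
  rw [← key]
  congr 1
  apply congrArg
  apply Finset.filter_congr
  intro p _
  show (∀ i, Odd i → p.parts.count i ≤ 1) ↔ _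
  constructor
  · intro hp
    constructor
    · intro j
      show Multiset.count j p.parts ∈ (if Odd j then ({0,1} : Set ℕ) else Set.univ)
      by_cases h : Odd j
      · rw [if_pos h]
        have := hp j h
        simp only [Set.mem_insert_iff, Set.mem_singleton_iff]
        omega
      · rw [if_neg h]
        exact Set.mem_univ _
    · intro j hj
      rw [Finset.mem_filter, Finset.mem_range]
      constructor
      · have hle : j ≤ n := by
          have := Multiset.single_le_sum (fun _ _ => Nat.zero_le _) _ hj
          rwa [p.parts_sum] at this
        omega
      · exact p.parts_pos hj
  · intro hp i hodd
    have h1 := hp.1 i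
    rw [show (if Odd i then ({0,1} : Set ℕ) else Set.univ)
      = ({0,1} : Set ℕ) from if_pos hodd] at h1
    simp only [Set.mem_insert_iff, Set.mem_singleton_iff] at h1
    omega

open scoped Classical in
lemma pod_prod_split (n : ℕ) :
    (∏ i ∈ (range (n+1)).filter (fun i => 0 < i),
        (if Odd i then (1 + X^i : PowerSeries ℤ) else DInv i))
      = OddP ((n+1)/2) * EvenP (n/2) := by
  rw [← Finset.prod_filter_mul_prod_filter_not ((range (n+1)).filter (fun i => 0 < i)) Odd]
  congr 1
  · have himg : ((range (n+1)).filter (fun i => 0 < i)).filter Odd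
        = (range ((n+1)/2)).image (fun k => 2*k+1) := by
      ext i
      simp only [Finset.mem_filter, Finset.mem_range, Finset.mem_image, Nat.odd_iff]
      constructor
      · rintro ⟨⟨h1, h2⟩, h3⟩
        exact ⟨i/2, by omega, by omega⟩
      · rintro ⟨k, hk, hk2⟩
        omega
    rw [himg, Finset.prod_image (fun a _ b _ hab => by omega)]
    rw [OddP]
    apply Finset.prod_congr rfl
    intro k _
    rw [if_pos ⟨k, by ring⟩]
  · have himg : ((range (n+1)).filter (fun i => 0 < i)).filter (fun i => ¬ Odd i)
        = (range (n/2)).image (fun k => 2*k+2) := by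
      ext i
      simp only [Finset.mem_filter, Finset.mem_range, Finset.mem_image, Nat.odd_iff]
      constructor
      · rintro ⟨⟨h1, h2⟩, h3⟩
        exact ⟨i/2 - 1, by omega, by omega⟩
      · rintro ⟨k, hk, hk2⟩
        omega
    rw [himg, Finset.prod_image (fun a _ b _ hab => by omega)]
    rw [EvenP]
    apply Finset.prod_congr rfl
    intro k _
    rw [if_neg (by rw [Nat.odd_iff]; omega)]
/-! ### Rescaling by -1 -/

lemma TEq.rescale_neg {m : ℕ} {f g : PowerSeries ℤ} (h : TEq m f g) :
    TEq m (rescale (-1 : ℤ) f) (rescale (-1 : ℤ) g) := by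
  intro i hi
  rw [coeff_rescale, coeff_rescale, h i hi]

lemma rescale_one_sub_pow (a : ℤ) (d : ℕ) :
    rescale a (1 - X^d : PowerSeries ℤ) = 1 - C (a^d) * X^d := by
  rw [map_sub, map_one, map_pow, rescale_X, mul_pow, ← map_pow]

lemma rescale_Aodd (L : ℕ) : rescale (-1 : ℤ) (Aodd L) = OddP L := by
  rw [Aodd, OddP, map_prod]
  apply Finset.prod_congr rfl
  intro k _
  rw [rescale_one_sub_pow]
  have : ((-1 : ℤ))^(2*k+1) = -1 := Odd.neg_one_pow ⟨k, by ring⟩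
  rw [this]
  have : C (-1) = -1 := by
    rw [show (-1 : ℤ) = -(1:ℤ) from rfl, map_neg, map_one]
  rw [this]
  ring

lemma rescale_Bev (L : ℕ) : rescale (-1 : ℤ) (Bev L) = Bev L := by
  rw [Bev, map_prod]
  apply Finset.prod_congr rfl
  intro k _
  rw [rescale_one_sub_pow]
  have : ((-1 : ℤ))^(2*k+2) = 1 := Even.neg_one_pow ⟨k+1, by ring⟩
  rw [this, map_one]
  ring

/-! ### Main bridging theorem -/

open scoped Classical in
theorem main (n : ℕ) :
    ((Finset.univ.filter
        (fun p : Nat.Partition n => ∀ i, Odd i → p.parts.count i ≤ 1)).card : ℤ)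
      = (-1)^n * acomp n := by
  have hres : TEq n (rescale (-1 : ℤ) psi * OddP n) (Bev n) := by
    have h := (gauss_TEq n).rescale_neg
    rwa [map_mul, rescale_Aodd, rescale_Bev] at h
  have h2 : TEq n ((rescale (-1:ℤ) psi) * (OddP n * EvenP n)) 1 := by
    have h3 := TEq.mul hres (TEq.refl (EvenP n))
    rw [Bev_mul_EvenP] at h3
    exact (TEq.of_eq (by ring)).trans h3
  have hexact : (rescale (-1:ℤ) psi) * (rescale (-1:ℤ) (PowerSeries.mk fun k => acomp k)) = 1 := by
    rw [← map_mul, psi_mul_acomp, map_one]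
  have huniq : TEq n (OddP n * EvenP n) (rescale (-1:ℤ) (PowerSeries.mk fun k => acomp k)) :=
    TEq.inv_unique hexact h2
  have hext : TEq n (OddP ((n+1)/2) * EvenP (n/2)) (OddP n * EvenP n) := by
    apply TEq.mul
    · exact (prod_range_TEq _ (by omega) (fun i hi => TEq_one_add_pow (by omega))).symm
    · exact (prod_range_TEq _ (by omega) (fun i hi => TEq_DInv_one (by omega))).symm
  calc ((Finset.univ.filter
        (fun p : Nat.Partition n => ∀ i, Odd i → p.parts.count i ≤ 1)).card : ℤ)
      = coeff n (∏ i ∈ (range (n+1)).filter (fun i => 0 < i),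
          (if Odd i then (1 + X^i : PowerSeries ℤ) else DInv i)) := pod_count n
    _ = coeff n (OddP ((n+1)/2) * EvenP (n/2)) := by rw [pod_prod_split]
    _ = coeff n (OddP n * EvenP n) := hext n le_rfl
    _ = coeff n (rescale (-1:ℤ) (PowerSeries.mk fun k => acomp k)) := huniq n le_rfl
    _ = (-1)^n * acomp n := by rw [coeff_rescale, coeff_mk]
end

end PodProof

/- **Corollary.** The number `pod(n)` of partitions of `n` in which no odd part repeats
equals `(-1)^n ∑ (-1)^{ℓ(c)}` over compositions of `n` into triangular parts. -/
open Classical in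
theorem pod_eq_composition_sum (n : ℕ) :
    (Nat.card {lam : Nat.Partition n // ∀ i, Odd i → lam.parts.count i ≤ 1} : ℤ)
      = (-1) ^ n *
        ∑ c ∈ Finset.univ.filter (fun c : Composition n => ∀ i ∈ c.blocks,
            ∃ m : ℕ, 1 ≤ m ∧ 2 * i = m * (m + 1)),
          (-1 : ℤ) ^ c.length := by
  have h := PodProof.main n
  have hcard : Nat.card {lam : Nat.Partition n // ∀ i, Odd i → lam.parts.count i ≤ 1}
      = (Finset.univ.filter
          (fun p : Nat.Partition n => ∀ i, Odd i → p.parts.count i ≤ 1)).card := by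
    rw [Nat.card_eq_fintype_card, Fintype.card_subtype]
  have hacomp : PodProof.acomp n
      = ∑ c ∈ Finset.univ.filter (fun c : Composition n => ∀ i ∈ c.blocks,
            ∃ m : ℕ, 1 ≤ m ∧ 2 * i = m * (m + 1)),
          (-1 : ℤ) ^ c.length := rfl
  rw [hcard, h, hacomp]
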